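/- Same sign of the forward and hidden-time-reversed steady currents (Theorem 'currentverse'): Assume in addition that the kernels of W and of W̃ are both one-dimensional, that r : Fin n → ℝ is strictly positive with W *ᵥ r = 0, and that r̃ : Fin n → ℝ is strictly positive with W̃ *ᵥ r̃ = 0. Then the steady currents along the observable edge, φ := W a b * r b − W b a * r a and φ̃ := W̃ a b * r̃ b − W̃ b a * r̃ a, satisfy φ * φ̃ ≥ 0 (they have the same sign). -/

import Mathlib

open Matrix Finset

private lemma ker_colinear {n : ℕ} (W : Matrix (Fin n) (Fin n) ℝ)
    (hker : Module.finrank ℝ (LinearMap.ker W.mulVecLin) = 1)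
    (r : Fin n → ℝ) (hWr : W *ᵥ r = 0) (hrne : r ≠ 0)
    (w : Fin n → ℝ) (hww : W *ᵥ w = 0) :
    ∃ c : ℝ, ∀ i, w i = c * r i := by
  have hrK : r ∈ LinearMap.ker W.mulVecLin := by
    simp [LinearMap.mem_ker, Matrix.mulVecLin_apply, hWr]
  have hwK : w ∈ LinearMap.ker W.mulVecLin := by
    simp [LinearMap.mem_ker, Matrix.mulVecLin_apply, hww]
  have hv : (⟨r, hrK⟩ : LinearMap.ker W.mulVecLin) ≠ 0 := by
    intro h
    exact hrne (congrArg Subtype.val h)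
  obtain ⟨c, hc⟩ := (finrank_eq_one_iff_of_nonzero'
    (⟨r, hrK⟩ : LinearMap.ker W.mulVecLin) hv).mp hker ⟨w, hwK⟩
  refine ⟨c, fun i => ?_⟩
  have h2 := congrFun (congrArg Subtype.val hc) i
  simpa [eq_comm] using h2

private lemma key_pos {n : ℕ} (W : Matrix (Fin n) (Fin n) ℝ)
    (hoff : ∀ i j, i ≠ j → 0 ≤ W i j)
    (a b : Fin n) (hab : a ≠ b)
    (p r : Fin n → ℝ) (hp : ∀ i, 0 < p i) (hr : ∀ i, 0 < r i)
    (hWpa : (W *ᵥ p) a = W a b * p b - W b a * p a)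
    (hWpb : (W *ᵥ p) b = -(W a b * p b - W b a * p a))
    (hWpo : ∀ i, i ≠ a → i ≠ b → (W *ᵥ p) i = 0)
    (hcol : ∀ j, ∑ i, W i j = 0)
    (hker : Module.finrank ℝ (LinearMap.ker W.mulVecLin) = 1)
    (hWr : W *ᵥ r = 0)
    (hJ : 0 < W a b * p b - W b a * p a) :
    0 ≤ W a b * r b - W b a * r a := by
  set Jp := W a b * p b - W b a * p a with hJp
  have hmv : ∀ (V : Matrix (Fin n) (Fin n) ℝ) (v : Fin n → ℝ) (i : Fin n),
      (V *ᵥ v) i = ∑ j, V i j * v j := by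
    intro V v i; rfl
  obtain ⟨i0, -, hi0⟩ := Finset.exists_min_image Finset.univ (fun i => r i / p i)
    ⟨a, Finset.mem_univ a⟩
  set t := r i0 / p i0 with htdef
  have ht : 0 < t := div_pos (hr i0) (hp i0)
  set x : Fin n → ℝ := fun i => r i - t * p i with hxdef
  have hx0 : ∀ i, 0 ≤ x i := by
    intro i
    have h1 : t ≤ r i / p i := hi0 i (Finset.mem_univ i)
    have h2 : t * p i ≤ r i := (le_div_iff₀ (hp i)).mp h1
    simp only [hxdef]
    linarith
  have hxi0 : x i0 = 0 := by
    simp only [hxdef, htdef]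
    rw [div_mul_cancel₀ _ (hp i0).ne', sub_self]
  have hWx : ∀ i, (W *ᵥ x) i = -(t * (W *ᵥ p) i) := by
    intro i
    have h1 : (W *ᵥ r) i = 0 := by rw [hWr]; rfl
    have h2 : (W *ᵥ x) i = (W *ᵥ r) i - t * (W *ᵥ p) i := by
      rw [hmv, hmv, hmv, Finset.mul_sum, ← Finset.sum_sub_distrib]
      refine Finset.sum_congr rfl fun j _ => ?_
      simp only [hxdef]; ring
    rw [h2, h1]; ring
  -- x vanishes nowhere on a
  have hA : ∀ i, x i = 0 → i ≠ a := by
    intro i hxi hia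
    subst hia
    have h1 : (W *ᵥ x) i = -(t * Jp) := by rw [hWx, hWpa]
    have h2 : 0 ≤ (W *ᵥ x) i := by
      rw [hmv]
      rw [← Finset.add_sum_erase _ _ (Finset.mem_univ i), hxi, mul_zero, zero_add]
      refine Finset.sum_nonneg fun j hj => ?_
      exact mul_nonneg (hoff i j (Finset.ne_of_mem_erase hj).symm) (hx0 j)
    nlinarith
  have hxa : 0 < x a := by
    rcases (hx0 a).lt_or_eq with h | h
    · exact h
    · exact absurd rfl (hA a h.symm)
  by_cases hxb : x b = 0
  · -- current is nonnegative
    have h1 : (W *ᵥ x) b = t * Jp := by rw [hWx, hWpb]; ring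
    have hceq : W a b * r b - W b a * r a = t * Jp - W b a * x a := by
      have hra : r a = x a + t * p a := by simp [hxdef]
      have hrb : r b = t * p b := by
        have : x b = r b - t * p b := by simp [hxdef]
        linarith [hxb ▸ this]
      rw [hra, hrb, hJp]; ring
    have h2 : W b a * x a ≤ ∑ j, W b j * x j := by
      rw [← Finset.add_sum_erase _ _ (Finset.mem_univ b), hxb, mul_zero, zero_add]
      refine Finset.single_le_sum (f := fun j => W b j * x j) (fun j hj =>
        mul_nonneg (hoff b j (Finset.ne_of_mem_erase hj).symm) (hx0 j)) ?_
      exact Finset.mem_erase.mpr ⟨hab, Finset.mem_univ a⟩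
    rw [hceq]
    have h3 : (W *ᵥ x) b = ∑ j, W b j * x j := hmv W x b
    linarith
  · -- contradiction with one-dimensional kernel
    exfalso
    have hxb' : 0 < x b := (hx0 b).lt_of_ne (Ne.symm hxb)
    have hclos : ∀ i, x i = 0 → ∀ j, W i j ≠ 0 → x j = 0 := by
      intro i hxi j hWij
      by_cases hji : j = i
      · rw [hji]; exact hxi
      have hia : i ≠ a := hA i hxi
      have hib : i ≠ b := fun h => hxb (h ▸ hxi)
      have h0 : (W *ᵥ x) i = 0 := by rw [hWx, hWpo i hia hib]; ring
      have hsum0 : ∑ j ∈ Finset.univ.erase i, W i j * x j = 0 := by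
        have h3 := hmv W x i
        rw [← Finset.add_sum_erase _ _ (Finset.mem_univ i), hxi, mul_zero, zero_add] at h3
        rw [← h3, h0]
      have hterm := (Finset.sum_eq_zero_iff_of_nonneg (fun j hj =>
        mul_nonneg (hoff i j (Finset.ne_of_mem_erase hj).symm) (hx0 j))).mp hsum0 j
        (Finset.mem_erase.mpr ⟨hji, Finset.mem_univ j⟩)
      rcases mul_eq_zero.mp hterm with h | h
      · exact absurd h hWij
      · exact h
    set w : Fin n → ℝ := fun i => if x i = 0 then p i else 0 with hwdef
    have hWw_zero : ∀ i, x i = 0 → (W *ᵥ w) i = 0 := by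
      intro i hxi
      have hia : i ≠ a := hA i hxi
      have hib : i ≠ b := fun h => hxb (h ▸ hxi)
      have h1 : ∀ j, W i j * w j = W i j * p j := by
        intro j
        by_cases hxj : x j = 0
        · simp [hwdef, hxj]
        · have hW0 : W i j = 0 := by
            by_contra hne
            exact hxj (hclos i hxi j hne)
          simp [hW0]
      rw [hmv]
      calc ∑ j, W i j * w j = ∑ j, W i j * p j := Finset.sum_congr rfl fun j _ => h1 j
        _ = (W *ᵥ p) i := (hmv W p i).symm
        _ = 0 := hWpo i hia hib
    have hWw_nonneg : ∀ i, 0 ≤ (W *ᵥ w) i := by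
      intro i
      by_cases hxi : x i = 0
      · rw [hWw_zero i hxi]
      · rw [hmv]
        refine Finset.sum_nonneg fun j _ => ?_
        by_cases hxj : x j = 0
        · have hji : j ≠ i := fun h => hxi (h ▸ hxj)
          simp only [hwdef, if_pos hxj]
          exact mul_nonneg (hoff i j hji.symm) (hp j).le
        · simp [hwdef, hxj]
    have hWw_total : ∑ i, (W *ᵥ w) i = 0 := by
      calc ∑ i, (W *ᵥ w) i = ∑ i, ∑ j, W i j * w j := Finset.sum_congr rfl fun i _ => hmv W w i
        _ = ∑ j, ∑ i, W i j * w j := Finset.sum_comm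
        _ = ∑ j, (∑ i, W i j) * w j := by
            refine Finset.sum_congr rfl fun j _ => ?_
            rw [Finset.sum_mul]
        _ = 0 := by simp [hcol]
    have hWw : W *ᵥ w = 0 := by
      funext i
      have := (Finset.sum_eq_zero_iff_of_nonneg (fun i _ => hWw_nonneg i)).mp hWw_total i
        (Finset.mem_univ i)
      simpa using this
    have hrne : r ≠ 0 := fun h => (hr a).ne' (congrFun h a)
    obtain ⟨c, hc⟩ := ker_colinear W hker r hWr hrne w hWw
    have h1 : w a = 0 := by simp [hwdef, hxa.ne']
    have hc0 : c = 0 := by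
      have := hc a
      rw [h1] at this
      exact (mul_eq_zero.mp this.symm).resolve_right (hr a).ne'
    have h2 : w i0 = p i0 := by simp [hwdef, hxi0]
    have := hc i0
    rw [h2, hc0, zero_mul] at this
    exact (hp i0).ne' this

private lemma sign_master {n : ℕ} (W : Matrix (Fin n) (Fin n) ℝ)
    (hoff : ∀ i j, i ≠ j → 0 ≤ W i j)
    (a b : Fin n) (hab : a ≠ b)
    (p r : Fin n → ℝ) (hp : ∀ i, 0 < p i) (hr : ∀ i, 0 < r i)
    (hWpa : (W *ᵥ p) a = W a b * p b - W b a * p a)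
    (hWpb : (W *ᵥ p) b = -(W a b * p b - W b a * p a))
    (hWpo : ∀ i, i ≠ a → i ≠ b → (W *ᵥ p) i = 0)
    (hcol : ∀ j, ∑ i, W i j = 0)
    (hker : Module.finrank ℝ (LinearMap.ker W.mulVecLin) = 1)
    (hWr : W *ᵥ r = 0) :
    (0 < W a b * p b - W b a * p a → 0 ≤ W a b * r b - W b a * r a) ∧
    (W a b * p b - W b a * p a = 0 → W a b * r b - W b a * r a = 0) ∧
    (W a b * p b - W b a * p a < 0 → W a b * r b - W b a * r a ≤ 0) := by
  refine ⟨fun hJ => key_pos W hoff a b hab p r hp hr hWpa hWpb hWpo hcol hker hWr hJ,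
    fun hJ0 => ?_, fun hJn => ?_⟩
  · -- p is in the kernel, hence proportional to r
    have hWp0 : W *ᵥ p = 0 := by
      funext i
      by_cases hia : i = a
      · subst hia; rw [hWpa, hJ0]; rfl
      by_cases hib : i = b
      · subst hib; rw [hWpb, hJ0]; simp
      · rw [hWpo i hia hib]; rfl
    have hrne : r ≠ 0 := fun h => (hr a).ne' (congrFun h a)
    obtain ⟨c, hc⟩ := ker_colinear W hker r hWr hrne p hWp0
    have hc0 : c ≠ 0 := by
      intro h
      have := hc a
      rw [h, zero_mul] at this
      exact (hp a).ne' this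
    have : c * (W a b * r b - W b a * r a) = 0 := by
      rw [← hJ0, hc a, hc b]; ring
    rcases mul_eq_zero.mp this with h | h
    · exact absurd h hc0
    · exact h
  · have hWpa' : (W *ᵥ p) b = W b a * p a - W a b * p b := by rw [hWpb]; ring
    have hWpb' : (W *ᵥ p) a = -(W b a * p a - W a b * p b) := by rw [hWpa]; ring
    have := key_pos W hoff b a hab.symm p r hp hr hWpa' hWpb'
      (fun i h1 h2 => hWpo i h2 h1) hcol hker hWr (by linarith)
    linarith

/-- Same sign of the forward and hidden-time-reversed steady currents
(Theorem "currentverse"). -/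
theorem same_sign_currents {n : ℕ} (hn : 3 ≤ n)
    (W Whid : Matrix (Fin n) (Fin n) ℝ)
    (hW1 : ∀ i j, i ≠ j → 0 ≤ W i j)
    (hW2 : ∀ j, ∑ i, W i j = 0)
    (a b : Fin n) (hab : a ≠ b)
    (hWab : 0 < W a b) (hWba : 0 < W b a)
    (hH1 : Whid a b = 0) (hH2 : Whid b a = 0)
    (hH3 : Whid a a = W a a + W b a)
    (hH4 : Whid b b = W b b + W a b)
    (hH5 : ∀ i j, ¬(i = a ∧ j = b) → ¬(i = b ∧ j = a) → ¬(i = a ∧ j = a) →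
      ¬(i = b ∧ j = b) → Whid i j = W i j)
    (p : Fin n → ℝ) (hp1 : ∀ i, 0 < p i) (hp2 : ∑ i, p i = 1)
    (hp3 : Whid *ᵥ p = 0)
    (Q : ℝ) (hQdef : Q = Real.log (W a b * p b / (W b a * p a)))
    (M : ℝ → Matrix (Fin n) (Fin n) ℝ)
    (hM1 : ∀ q, M q a b = W a b * Real.exp (-q))
    (hM2 : ∀ q, M q b a = W b a * Real.exp q)
    (hM3 : ∀ q i j, ¬(i = a ∧ j = b) → ¬(i = b ∧ j = a) → M q i j = W i j)
    (Wt : Matrix (Fin n) (Fin n) ℝ)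
    (hWt : Wt = Matrix.diagonal p * (M Q)ᵀ * (Matrix.diagonal p)⁻¹)
    (hkerW : Module.finrank ℝ (LinearMap.ker W.mulVecLin) = 1)
    (hkerWt : Module.finrank ℝ (LinearMap.ker Wt.mulVecLin) = 1)
    (r : Fin n → ℝ) (hr1 : ∀ i, 0 < r i) (hr2 : W *ᵥ r = 0)
    (rt : Fin n → ℝ) (hrt1 : ∀ i, 0 < rt i) (hrt2 : Wt *ᵥ rt = 0) :
    0 ≤ (W a b * r b - W b a * r a) * (Wt a b * rt b - Wt b a * rt a) := by
  have hmv : ∀ (V : Matrix (Fin n) (Fin n) ℝ) (v : Fin n → ℝ) (i : Fin n),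
      (V *ᵥ v) i = ∑ j, V i j * v j := by
    intro V v i; rfl
  -- the exponential of the effective affinity
  have hpos : 0 < W a b * p b / (W b a * p a) :=
    div_pos (mul_pos hWab (hp1 b)) (mul_pos hWba (hp1 a))
  have hE : Real.exp Q = W a b * p b / (W b a * p a) := by
    rw [hQdef]; exact Real.exp_log hpos
  have id1 : W b a * Real.exp Q * p a = W a b * p b := by
    rw [hE]
    field_simp [hWba.ne', (hp1 a).ne']
  have id2 : W a b * Real.exp (-Q) * p b = W b a * p a := by
    rw [Real.exp_neg, hE]
    field_simp [hWba.ne', (hp1 a).ne', hWab.ne', (hp1 b).ne']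
  -- generic computation of (V *ᵥ p) via comparison with Whid
  have hdiff : ∀ (V : Matrix (Fin n) (Fin n) ℝ) (i : Fin n),
      (∀ j, j ≠ a → j ≠ b → V i j = Whid i j) →
      (V *ᵥ p) i = (V i a - Whid i a) * p a + (V i b - Whid i b) * p b := by
    intro V i hv
    have h0 : (Whid *ᵥ p) i = 0 := by rw [hp3]; rfl
    have h1 : (V *ᵥ p) i - (Whid *ᵥ p) i = ∑ j, (V i j - Whid i j) * p j := by
      rw [hmv, hmv, ← Finset.sum_sub_distrib]
      exact Finset.sum_congr rfl fun j _ => by ring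
    have h2 : ∑ j, (V i j - Whid i j) * p j
        = ∑ j ∈ ({a, b} : Finset (Fin n)), (V i j - Whid i j) * p j := by
      symm
      apply Finset.sum_subset (Finset.subset_univ _)
      intro j _ hj
      simp only [Finset.mem_insert, Finset.mem_singleton, not_or] at hj
      rw [hv j hj.1 hj.2, sub_self, zero_mul]
    rw [h0, sub_zero] at h1
    rw [h1, h2, Finset.sum_pair hab]
  have hWrowWhid : ∀ i j, i ≠ a → i ≠ b → Whid i j = W i j := by
    intro i j hia hib
    exact hH5 i j (fun h => hia h.1) (fun h => hib h.1) (fun h => hia h.1) (fun h => hib h.1)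
  -- values of W *ᵥ p
  have hWpa : (W *ᵥ p) a = W a b * p b - W b a * p a := by
    have hv : ∀ j, j ≠ a → j ≠ b → W a j = Whid a j := by
      intro j hja hjb
      exact (hH5 a j (fun h => hjb h.2) (fun h => hab h.1) (fun h => hja h.2)
        (fun h => hab h.1)).symm
    rw [hdiff W a hv, hH3, hH1]; ring
  have hWpb : (W *ᵥ p) b = -(W a b * p b - W b a * p a) := by
    have hv : ∀ j, j ≠ a → j ≠ b → W b j = Whid b j := by
      intro j hja hjb
      exact (hH5 b j (fun h => hab h.1.symm) (fun h => hja h.2) (fun h => hab h.1.symm)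
        (fun h => hjb h.2)).symm
    rw [hdiff W b hv, hH4, hH2]; ring
  have hWpo : ∀ i, i ≠ a → i ≠ b → (W *ᵥ p) i = 0 := by
    intro i hia hib
    have h0 : (Whid *ᵥ p) i = 0 := by rw [hp3]; rfl
    rw [hmv]
    calc ∑ j, W i j * p j = ∑ j, Whid i j * p j :=
          Finset.sum_congr rfl fun j _ => by rw [hWrowWhid i j hia hib]
      _ = (Whid *ᵥ p) i := (hmv Whid p i).symm
      _ = 0 := h0
  -- M Q *ᵥ p = 0
  have hMQa : (M Q *ᵥ p) a = 0 := by
    have hv : ∀ j, j ≠ a → j ≠ b → M Q a j = Whid a j := by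
      intro j hja hjb
      rw [hM3 Q a j (fun h => hjb h.2) (fun h => hab h.1)]
      exact (hH5 a j (fun h => hjb h.2) (fun h => hab h.1) (fun h => hja h.2)
        (fun h => hab h.1)).symm
    rw [hdiff (M Q) a hv, hH3, hH1, hM1,
      hM3 Q a a (fun h => hab h.2) (fun h => hab h.1)]
    linear_combination id2
  have hMQb : (M Q *ᵥ p) b = 0 := by
    have hv : ∀ j, j ≠ a → j ≠ b → M Q b j = Whid b j := by
      intro j hja hjb
      rw [hM3 Q b j (fun h => hab h.1.symm) (fun h => hja h.2)]
      exact (hH5 b j (fun h => hab h.1.symm) (fun h => hja h.2) (fun h => hab h.1.symm)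
        (fun h => hjb h.2)).symm
    rw [hdiff (M Q) b hv, hH4, hH2, hM2,
      hM3 Q b b (fun h => hab h.1.symm) (fun h => hab h.2.symm)]
    linear_combination id1
  have hMQp : M Q *ᵥ p = 0 := by
    funext i
    show (M Q *ᵥ p) i = 0
    by_cases hia : i = a
    · rw [hia]; exact hMQa
    by_cases hib : i = b
    · rw [hib]; exact hMQb
    · rw [hmv]
      calc ∑ j, M Q i j * p j = ∑ j, W i j * p j := by
            refine Finset.sum_congr rfl fun j _ => ?_
            rw [hM3 Q i j (fun h => hia h.1) (fun h => hib h.1)]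
        _ = (W *ᵥ p) i := (hmv W p i).symm
        _ = 0 := hWpo i hia hib
  -- the inverse of the diagonal matrix
  have hPinv : (Matrix.diagonal p)⁻¹ = Matrix.diagonal (fun i => (p i)⁻¹) := by
    apply Matrix.inv_eq_right_inv
    rw [Matrix.diagonal_mul_diagonal]
    have : (fun i => p i * (p i)⁻¹) = fun _ => (1 : ℝ) :=
      funext fun i => mul_inv_cancel₀ (hp1 i).ne'
    rw [this]
    exact Matrix.diagonal_one
  have hWtent : ∀ i j, Wt i j = p i * M Q j i * (p j)⁻¹ := by
    intro i j
    rw [hWt, hPinv, Matrix.mul_diagonal, Matrix.diagonal_mul, Matrix.transpose_apply]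
  -- observable entries of Wt
  have hWtab : Wt a b = W a b := by
    rw [hWtent, hM2]
    field_simp [(hp1 b).ne']
    linear_combination id1
  have hWtba : Wt b a = W b a := by
    rw [hWtent, hM1]
    field_simp [(hp1 a).ne']
    linear_combination id2
  -- off-diagonal nonnegativity of M Q and Wt
  have hMQoff : ∀ i j, i ≠ j → 0 ≤ M Q i j := by
    intro i j hij
    by_cases h1 : i = a ∧ j = b
    · rw [h1.1, h1.2, hM1]
      positivity
    by_cases h2 : i = b ∧ j = a
    · rw [h2.1, h2.2, hM2]
      positivity
    · rw [hM3 Q i j h1 h2]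
      exact hW1 i j hij
  have hWtoff : ∀ i j, i ≠ j → 0 ≤ Wt i j := by
    intro i j hij
    rw [hWtent]
    exact mul_nonneg (mul_nonneg (hp1 i).le (hMQoff j i (Ne.symm hij))) (inv_nonneg.mpr (hp1 j).le)
  -- column sums of Wt vanish
  have hWtcol : ∀ j, ∑ i, Wt i j = 0 := by
    intro j
    have h1 : ∑ i, Wt i j = (∑ i, M Q j i * p i) * (p j)⁻¹ := by
      rw [Finset.sum_mul]
      exact Finset.sum_congr rfl fun i _ => by rw [hWtent]; ring
    have h2 : ∑ i, M Q j i * p i = 0 := by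
      rw [← hmv (M Q) p j, hMQp]; rfl
    rw [h1, h2, zero_mul]
  -- (Wt *ᵥ p) in terms of column sums of M Q
  have hWtp : ∀ i, (Wt *ᵥ p) i = p i * ∑ j, M Q j i := by
    intro i
    rw [hmv, Finset.mul_sum]
    refine Finset.sum_congr rfl fun j _ => ?_
    rw [hWtent]
    exact inv_mul_cancel_right₀ (hp1 j).ne' _
  have hcolMQo : ∀ i, i ≠ a → i ≠ b → ∑ j, M Q j i = 0 := by
    intro i hia hib
    calc ∑ j, M Q j i = ∑ j, W j i := by
          refine Finset.sum_congr rfl fun j _ => ?_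
          exact hM3 Q j i (fun h => hib h.2) (fun h => hia h.2)
      _ = 0 := hW2 i
  have hcolMQa : ∑ j, M Q j a = W b a * Real.exp Q - W b a := by
    have h1 : ∑ j, M Q j a - ∑ j, W j a = ∑ j, (M Q j a - W j a) :=
      (Finset.sum_sub_distrib (fun j => M Q j a) (fun j => W j a)).symm
    have h2 : ∑ j, (M Q j a - W j a) = ∑ j ∈ ({b} : Finset (Fin n)), (M Q j a - W j a) := by
      symm
      apply Finset.sum_subset (Finset.subset_univ _)
      intro j _ hj
      have hjb : j ≠ b := by simpa using hj
      rw [hM3 Q j a (fun h => hab h.2) (fun h => hjb h.1), sub_self]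
    rw [Finset.sum_singleton, hM2] at h2
    rw [hW2 a, sub_zero] at h1
    rw [h1, h2]
  have hcolMQb : ∑ j, M Q j b = W a b * Real.exp (-Q) - W a b := by
    have h1 : ∑ j, M Q j b - ∑ j, W j b = ∑ j, (M Q j b - W j b) :=
      (Finset.sum_sub_distrib (fun j => M Q j b) (fun j => W j b)).symm
    have h2 : ∑ j, (M Q j b - W j b) = ∑ j ∈ ({a} : Finset (Fin n)), (M Q j b - W j b) := by
      symm
      apply Finset.sum_subset (Finset.subset_univ _)
      intro j _ hj
      have hja : j ≠ a := by simpa using hj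
      rw [hM3 Q j b (fun h => hja h.1) (fun h => hab h.2.symm), sub_self]
    rw [Finset.sum_singleton, hM1] at h2
    rw [hW2 b, sub_zero] at h1
    rw [h1, h2]
  -- values of Wt *ᵥ p
  have hWtpa : (Wt *ᵥ p) a = Wt a b * p b - Wt b a * p a := by
    rw [hWtp, hcolMQa, hWtab, hWtba]
    linear_combination id1
  have hWtpb : (Wt *ᵥ p) b = -(Wt a b * p b - Wt b a * p a) := by
    rw [hWtp, hcolMQb, hWtab, hWtba]
    linear_combination id2
  have hWtpo : ∀ i, i ≠ a → i ≠ b → (Wt *ᵥ p) i = 0 := by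
    intro i hia hib
    rw [hWtp, hcolMQo i hia hib, mul_zero]
  -- apply the sign lemma to both generators
  obtain ⟨s1p, s10, s1n⟩ := sign_master W hW1 a b hab p r hp1 hr1 hWpa hWpb hWpo hW2 hkerW hr2
  obtain ⟨s2p, s20, s2n⟩ := sign_master Wt hWtoff a b hab p rt hp1 hrt1 hWtpa hWtpb hWtpo
    hWtcol hkerWt hrt2
  rcases lt_trichotomy (W a b * p b - W b a * p a) 0 with h | h | h
  · have c1 := s1n h
    have c2 := s2n (by rw [hWtab, hWtba]; exact h)
    nlinarith
  · rw [s10 h, zero_mul]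
  · have c1 := s1p h
    have c2 := s2p (by rw [hWtab, hWtba]; exact h)
    exact mul_nonneg c1 c2
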